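/- Let Ω be a finite nonempty set, ρ a probability distribution on Ω, ε ≥ 0 and α ∈ (0,1]. If α·|Ω| ≥ 1, then min{ Σ_{x∈Ω}(ρ'(x) − α)_+ : ρ' a probability distribution on Ω with TV(ρ', ρ) ≤ ε } = ( Σ_{x∈Ω}(ρ(x) − α)_+ − ε )_+. -/
import Mathlib


open Finset

noncomputable section

/-- Total variation distance between two (finitely supported) distributions. -/
def tvDist {Ω : Type*} [Fintype Ω] (μ ν : Ω → ℝ) : ℝ :=
  (∑ x, |μ x - ν x|) / 2

lemma max_sub_max_le' (a b : ℝ) : max a 0 - max b 0 ≤ max (a - b) 0 := by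
  have h1 : a ≤ max (a - b) 0 + max b 0 := by
    calc a = (a - b) + b := by ring
    _ ≤ _ := add_le_add (le_max_left _ _) (le_max_left _ _)
  have h2 : (0:ℝ) ≤ max (a - b) 0 + max b 0 :=
    add_nonneg (le_max_right _ _) (le_max_right _ _)
  have := max_le h1 h2
  linarith

lemma max_zero_eq' (a : ℝ) : max a 0 = (a + |a|) / 2 := by
  rcases le_total 0 a with h | h
  · rw [abs_of_nonneg h, max_eq_left h]; ring
  · rw [abs_of_nonpos h, max_eq_right h]; ring

lemma abs_sub_of_mul_zero (a b : ℝ) (ha : 0 ≤ a) (hb : 0 ≤ b) (h : a * b = 0) :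
    |a - b| = a + b := by
  rcases mul_eq_zero.1 h with h0 | h0
  · rw [h0, zero_sub, abs_neg, abs_of_nonneg hb]; ring
  · rw [h0, sub_zero, abs_of_nonneg ha]; ring

lemma div_mul_self' (a b : ℝ) (h0 : 0 ≤ a) (h : a ≤ b) : a / b * b = a := by
  rcases eq_or_lt_of_le (h0.trans h) with hb | hb
  · simp [← hb]; linarith
  · field_simp

lemma div_le_one_of_le' (a b : ℝ) (h0 : 0 ≤ a) (h : a ≤ b) : a / b ≤ 1 := by
  rcases eq_or_lt_of_le (h0.trans h) with hb | hb
  · simp [← hb]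
  · exact (div_le_one hb).2 h

/-- If `α · |Ω| ≥ 1`, then
`min { ∑_x (ρ'(x) − α)₊ : ρ' a probability distribution with TV(ρ', ρ) ≤ ε }
  = ( ∑_x (ρ(x) − α)₊ − ε )₊`. -/
theorem stmt_2 {Ω : Type*} [Fintype Ω] [Nonempty Ω]
    (ρ : Ω → ℝ) (hρ0 : ∀ x, 0 ≤ ρ x) (hρ1 : ∑ x, ρ x = 1)
    (ε : ℝ) (hε : 0 ≤ ε) (α : ℝ) (hα : α ∈ Set.Ioc (0 : ℝ) 1)
    (hcard : 1 ≤ α * Fintype.card Ω) :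
    sInf {s : ℝ | ∃ ρ' : Ω → ℝ, (∀ x, 0 ≤ ρ' x) ∧ (∑ x, ρ' x = 1) ∧
        tvDist ρ' ρ ≤ ε ∧ s = ∑ x, max (ρ' x - α) 0}
      = max ((∑ x, max (ρ x - α) 0) - ε) 0 := by
  obtain ⟨hα0, hα1⟩ := hα
  set E : Ω → ℝ := fun x => max (ρ x - α) 0 with hEdef
  set D : Ω → ℝ := fun x => max (α - ρ x) 0 with hDdef
  set S : ℝ := ∑ x, E x with hSdef
  set T : ℝ := ∑ x, D x with hTdef
  have hE0 : ∀ x, 0 ≤ E x := fun x => le_max_right _ _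
  have hD0 : ∀ x, 0 ≤ D x := fun x => le_max_right _ _
  have hS0 : 0 ≤ S := Finset.sum_nonneg fun x _ => hE0 x
  have hT0 : 0 ≤ T := Finset.sum_nonneg fun x _ => hD0 x
  have hED : ∀ x, E x - D x = ρ x - α := by
    intro x
    simp only [hEdef, hDdef]
    rcases le_total (ρ x) α with h | h
    · rw [max_eq_right (by linarith), max_eq_left (by linarith)]; ring
    · rw [max_eq_left (by linarith), max_eq_right (by linarith)]; ring
  have hEDmul : ∀ x, E x * D x = 0 := by
    intro x
    simp only [hEdef, hDdef]
    rcases le_total (ρ x) α with h | h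
    · rw [max_eq_right (show ρ x - α ≤ 0 by linarith), zero_mul]
    · rw [max_eq_right (show α - ρ x ≤ 0 by linarith), mul_zero]
  have hST : S ≤ T := by
    have h1 : S - T = ∑ x, (ρ x - α) := by
      rw [hSdef, hTdef, ← Finset.sum_sub_distrib]
      exact Finset.sum_congr rfl fun x _ => hED x
    have h2 : ∑ x, (ρ x - α) = 1 - α * Fintype.card Ω := by
      rw [Finset.sum_sub_distrib, hρ1, Finset.sum_const, Finset.card_univ,
        nsmul_eq_mul, mul_comm]
    linarith
  set δ : ℝ := min ε S with hδdef
  have hδ0 : 0 ≤ δ := le_min hε hS0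
  have hδS : δ ≤ S := min_le_right _ _
  have hδT : δ ≤ T := hδS.trans hST
  have hδε : δ ≤ ε := min_le_left _ _
  have hcS : δ / S ≤ 1 := div_le_one_of_le' _ _ hδ0 hδS
  have hcT : δ / T ≤ 1 := div_le_one_of_le' _ _ hδ0 hδT
  have hcS0 : 0 ≤ δ / S := div_nonneg hδ0 hS0
  have hcT0 : 0 ≤ δ / T := div_nonneg hδ0 hT0
  set ρ' : Ω → ℝ := fun x => ρ x - (δ / S) * E x + (δ / T) * D x with hρ'def
  -- pointwise value of the objective for ρ'
  have hpt : ∀ x, max (ρ' x - α) 0 = (1 - δ / S) * E x := by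
    intro x
    rcases le_total α (ρ x) with h | h
    · have hDx : D x = 0 := by simp only [hDdef]; exact max_eq_right (by linarith)
      have hEx : E x = ρ x - α := by simp only [hEdef]; exact max_eq_left (by linarith)
      have : ρ' x - α = (1 - δ / S) * E x := by
        simp only [hρ'def, hDx, hEx]; ring
      rw [this]
      exact max_eq_left (mul_nonneg (by linarith) (hE0 x))
    · have hEx : E x = 0 := by simp only [hEdef]; exact max_eq_right (by linarith)
      have hDx : D x = α - ρ x := by simp only [hDdef]; exact max_eq_left (by linarith)
      have : ρ' x - α = (δ / T - 1) * D x := by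
        simp only [hρ'def, hEx, hDx]; ring
      rw [this, hEx, mul_zero]
      exact max_eq_right (mul_nonpos_of_nonpos_of_nonneg (by linarith) (hD0 x))
  have hρ'0 : ∀ x, 0 ≤ ρ' x := by
    intro x
    have h1 : (δ / S) * E x ≤ E x := by nlinarith [hE0 x]
    have h2 : 0 ≤ (δ / T) * D x := mul_nonneg hcT0 (hD0 x)
    have h3 : ρ x - E x ≥ 0 := by
      simp only [hEdef]
      rcases le_total (ρ x) α with h | h
      · rw [max_eq_right (by linarith)]; linarith [hρ0 x]
      · rw [max_eq_left (by linarith)]; linarith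
    simp only [hρ'def]; linarith
  have hρ'1 : ∑ x, ρ' x = 1 := by
    simp only [hρ'def]
    rw [Finset.sum_add_distrib, Finset.sum_sub_distrib, hρ1,
      ← Finset.mul_sum, ← Finset.mul_sum, ← hSdef, ← hTdef,
      div_mul_self' δ S hδ0 hδS, div_mul_self' δ T hδ0 hδT]
    ring
  have htv : tvDist ρ' ρ = δ := by
    unfold tvDist
    have : ∀ x, |ρ' x - ρ x| = (δ / T) * D x + (δ / S) * E x := by
      intro x
      have h1 : ρ' x - ρ x = (δ / T) * D x - (δ / S) * E x := by
        simp only [hρ'def]; ring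
      rw [h1]
      exact abs_sub_of_mul_zero _ _ (mul_nonneg hcT0 (hD0 x))
        (mul_nonneg hcS0 (hE0 x)) (by rw [mul_mul_mul_comm, mul_comm (D x), hEDmul x]; ring)
    rw [Finset.sum_congr rfl fun x _ => this x, Finset.sum_add_distrib,
      ← Finset.mul_sum, ← Finset.mul_sum, ← hSdef, ← hTdef,
      div_mul_self' δ T hδ0 hδT, div_mul_self' δ S hδ0 hδS]
    ring
  have hval : ∑ x, max (ρ' x - α) 0 = S - δ := by
    rw [Finset.sum_congr rfl fun x _ => hpt x, ← Finset.mul_sum, ← hSdef]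
    have : (1 - δ / S) * S = S - δ / S * S := by ring
    rw [this, div_mul_self' δ S hδ0 hδS]
  have hSδ : S - δ = max (S - ε) 0 := by
    rcases le_total ε S with h | h
    · rw [hδdef, min_eq_left h, max_eq_left (by linarith)]
    · rw [hδdef, min_eq_right h, max_eq_right (by linarith)]; ring
  -- membership
  have hmem : max (S - ε) 0 ∈ {s : ℝ | ∃ ρ' : Ω → ℝ, (∀ x, 0 ≤ ρ' x) ∧ (∑ x, ρ' x = 1) ∧
      tvDist ρ' ρ ≤ ε ∧ s = ∑ x, max (ρ' x - α) 0} :=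
    ⟨ρ', hρ'0, hρ'1, htv.le.trans hδε, by rw [hval, hSδ]⟩
  -- lower bound
  have hlb : ∀ s ∈ {s : ℝ | ∃ ρ' : Ω → ℝ, (∀ x, 0 ≤ ρ' x) ∧ (∑ x, ρ' x = 1) ∧
      tvDist ρ' ρ ≤ ε ∧ s = ∑ x, max (ρ' x - α) 0}, max (S - ε) 0 ≤ s := by
    rintro s ⟨σ, hσ0, hσ1, hσtv, rfl⟩
    have hsnn : 0 ≤ ∑ x, max (σ x - α) 0 :=
      Finset.sum_nonneg fun x _ => le_max_right _ _
    have key : S - ∑ x, max (σ x - α) 0 ≤ ε := by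
      have h1 : S - ∑ x, max (σ x - α) 0 = ∑ x, (E x - max (σ x - α) 0) := by
        rw [Finset.sum_sub_distrib, hSdef]
      have h2 : ∀ x, E x - max (σ x - α) 0 ≤ max (ρ x - σ x) 0 := by
        intro x
        have := max_sub_max_le' (ρ x - α) (σ x - α)
        simpa [hEdef, sub_sub_sub_cancel_right] using this
      have h3 : ∑ x, max (ρ x - σ x) 0 = ((∑ x, (ρ x - σ x)) + ∑ x, |ρ x - σ x|) / 2 := by
        rw [Finset.sum_congr rfl fun x _ => max_zero_eq' (ρ x - σ x),
          ← Finset.sum_add_distrib, Finset.sum_div]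
      have h4 : ∑ x, (ρ x - σ x) = 0 := by
        rw [Finset.sum_sub_distrib, hρ1, hσ1]; ring
      have h5 : ∑ x, |ρ x - σ x| = ∑ x, |σ x - ρ x| :=
        Finset.sum_congr rfl fun x _ => abs_sub_comm _ _
      have h6 : (∑ x, |σ x - ρ x|) / 2 ≤ ε := hσtv
      calc S - ∑ x, max (σ x - α) 0 = ∑ x, (E x - max (σ x - α) 0) := h1
        _ ≤ ∑ x, max (ρ x - σ x) 0 := Finset.sum_le_sum fun x _ => h2 x
        _ = ((∑ x, (ρ x - σ x)) + ∑ x, |ρ x - σ x|) / 2 := h3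
        _ = (∑ x, |σ x - ρ x|) / 2 := by rw [h4, h5]; ring
        _ ≤ ε := h6
    exact max_le (by linarith) hsnn
  have hbdd : BddBelow {s : ℝ | ∃ ρ' : Ω → ℝ, (∀ x, 0 ≤ ρ' x) ∧ (∑ x, ρ' x = 1) ∧
      tvDist ρ' ρ ≤ ε ∧ s = ∑ x, max (ρ' x - α) 0} := ⟨max (S - ε) 0, hlb⟩
  exact le_antisymm (csInf_le hbdd hmem) (le_csInf ⟨_, hmem⟩ hlb)
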